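/- Let (I_n : A_n → ℝ)_{n ≥ 1} satisfy the symmetry, vanishing, and chain rule properties, and define L : (0,1] → ℝ by L(α) = I_2((1,0)‖(α,1−α)). Then L(αβ) = L(α) + L(β) for all α, β ∈ (0,1]. -/

import Mathlib

open Finset MeasureTheory

/-- `p` is a probability distribution on `{1, …, n}` (i.e. `p ∈ Δₙ`). -/
def IsDist {n : ℕ} (p : Fin n → ℝ) : Prop :=
  (∀ i, 0 ≤ p i) ∧ ∑ i, p i = 1

/-- `(p, r) ∈ Aₙ`: both are distributions and `p` is absolutely continuous
with respect to `r`. -/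
def RelPair {n : ℕ} (p r : Fin n → ℝ) : Prop :=
  IsDist p ∧ IsDist r ∧ ∀ i, r i = 0 → p i = 0

/-- Decomposition of a sigma type over `Fin (n + 1)`. -/
def sigmaFinSuccEquiv {n : ℕ} (k : Fin (n + 1) → ℕ) :
    (Σ i : Fin (n + 1), Fin (k i)) ≃ (Fin (k 0) ⊕ Σ i : Fin n, Fin (k i.succ)) where
  toFun x :=
    Fin.cases (motive := fun i => Fin (k i) → Fin (k 0) ⊕ Σ i : Fin n, Fin (k i.succ))
      (fun j => Sum.inl j) (fun i j => Sum.inr ⟨i, j⟩) x.1 x.2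
  invFun y := y.elim (fun j => ⟨0, j⟩) fun x => ⟨x.1.succ, x.2⟩
  left_inv := by rintro ⟨i, j⟩; induction i using Fin.cases <;> rfl
  right_inv := by rintro (j | ⟨i, j⟩) <;> rfl

/-- The lexicographic equivalence `(Σ i : Fin n, Fin (k i)) ≃ Fin (k 1 + ⋯ + k n)`,
sending `(i, j)` to `k 1 + ⋯ + k (i - 1) + j`. -/
def finSigmaEquiv : ∀ {n : ℕ} (k : Fin n → ℕ), (Σ i : Fin n, Fin (k i)) ≃ Fin (∑ i, k i)
  | 0, _ => (Equiv.equivOfIsEmpty _ (Fin 0)).trans (finCongr (by simp))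
  | n + 1, k =>
      (sigmaFinSuccEquiv k).trans <|
        ((Equiv.refl (Fin (k 0))).sumCongr (finSigmaEquiv fun i => k i.succ)).trans <|
          finSumFinEquiv.trans (finCongr (Fin.sum_univ_succ k).symm)

/-- The composite distribution
`w ∘ (p¹, …, pⁿ) = (w₁p¹₁, …, w₁p¹_{k₁}, …, wₙpⁿ₁, …, wₙpⁿ_{kₙ}) ∈ Δ_{k₁+⋯+kₙ}`. -/
def comp {n : ℕ} (k : Fin n → ℕ) (w : Fin n → ℝ)
    (p : ∀ i, Fin (k i) → ℝ) : Fin (∑ i, k i) → ℝ :=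
  fun j => w ((finSigmaEquiv k).symm j).1 * p _ ((finSigmaEquiv k).symm j).2

/-- Symmetry: `I(p ‖ r) = I(pσ ‖ rσ)` for every permutation `σ`,
where `(pσ)ᵢ = p_{σ(i)}`. -/
def SymmRel (I : ∀ n : ℕ, (Fin n → ℝ) → (Fin n → ℝ) → ℝ) : Prop :=
  ∀ (n : ℕ) (p r : Fin n → ℝ) (σ : Equiv.Perm (Fin n)),
    RelPair p r → I n p r = I n (p ∘ σ) (r ∘ σ)

/-- Vanishing: `I(p ‖ p) = 0`. -/
def Vanishing (I : ∀ n : ℕ, (Fin n → ℝ) → (Fin n → ℝ) → ℝ) : Prop :=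
  ∀ (n : ℕ) (p : Fin n → ℝ), IsDist p → I n p p = 0

/-- The chain rule:
`I(w∘(p¹,…,pⁿ) ‖ w̃∘(p̃¹,…,p̃ⁿ)) = I(w ‖ w̃) + ∑ᵢ wᵢ I(pⁱ ‖ p̃ⁱ)`. -/
def ChainRule (I : ∀ n : ℕ, (Fin n → ℝ) → (Fin n → ℝ) → ℝ) : Prop :=
  ∀ (n : ℕ) (k : Fin n → ℕ) (w w' : Fin n → ℝ) (p p' : ∀ i, Fin (k i) → ℝ),
    RelPair w w' → (∀ i, RelPair (p i) (p' i)) →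
    I (∑ i, k i) (comp k w p) (comp k w' p') =
      I n w w' + ∑ i, w i * I (k i) (p i) (p' i)

-- Auxiliary definitions and lemmas

def pvecA (c d : ℝ) : ∀ i : Fin 2, Fin (![2,1] i) → ℝ :=
  Fin.cons ![c, d] (Fin.cons ![1] (fun i => i.elim0))

def pvecB (c d : ℝ) : ∀ i : Fin 2, Fin (![1,2] i) → ℝ :=
  Fin.cons ![1] (Fin.cons ![c, d] (fun i => i.elim0))

lemma compA (a b c d : ℝ) :
    (comp ![2,1] ![a,b] (pvecA c d) : Fin 3 → ℝ) = ![a*c, a*d, b*1] := by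
  funext j; fin_cases j <;> rfl

lemma compB (a b c d : ℝ) :
    (comp ![1,2] ![a,b] (pvecB c d) : Fin 3 → ℝ) = ![a*1, b*c, b*d] := by
  funext j; fin_cases j <;> rfl

lemma isDist_pair (a : ℝ) (h0 : 0 ≤ a) (h1 : a ≤ 1) : IsDist ![a, 1-a] := by
  constructor
  · intro i; fin_cases i <;> simp <;> linarith
  · simp [Fin.sum_univ_two]

lemma isDist_one0 : IsDist (![1, 0] : Fin 2 → ℝ) := by
  constructor
  · intro i; fin_cases i <;> norm_num
  · simp [Fin.sum_univ_two]

lemma isDist_one1 : IsDist (![1] : Fin 1 → ℝ) := by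
  constructor
  · intro i; fin_cases i; norm_num
  · simp

lemma relPair_one1 : RelPair (![1] : Fin 1 → ℝ) ![1] :=
  ⟨isDist_one1, isDist_one1, fun _ h => h⟩

lemma relPair_self {n : ℕ} {p : Fin n → ℝ} (h : IsDist p) : RelPair p p :=
  ⟨h, h, fun _ h => h⟩

lemma relPair_one0 (a : ℝ) (h0 : 0 < a) (h1 : a ≤ 1) :
    RelPair (![1, 0] : Fin 2 → ℝ) ![a, 1-a] := by
  refine ⟨isDist_one0, isDist_pair a h0.le h1, ?_⟩
  intro i hi; fin_cases i
  · simp at hi; exact absurd hi (by linarith)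
  · simp

/-- Lemma 2.3 of the paper: the function `L(α) = I((1,0) ‖ (α, 1-α))` satisfies
`L(αβ) = L(α) + L(β)` for all `α, β ∈ (0, 1]`. -/
theorem relent_L_multiplicative (I : ∀ n : ℕ, (Fin n → ℝ) → (Fin n → ℝ) → ℝ)
    (hS : SymmRel I) (hV : Vanishing I) (hC : ChainRule I)
    (α β : ℝ) (hα : α ∈ Set.Ioc (0 : ℝ) 1) (hβ : β ∈ Set.Ioc (0 : ℝ) 1) :
    I 2 ![1, 0] ![α * β, 1 - α * β] =
      I 2 ![1, 0] ![α, 1 - α] + I 2 ![1, 0] ![β, 1 - β] := by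
  obtain ⟨hα0, hα1⟩ := hα
  obtain ⟨hβ0, hβ1⟩ := hβ
  have hab0 : 0 < α * β := mul_pos hα0 hβ0
  have hab1 : α * β ≤ 1 := by
    calc α * β ≤ 1 * 1 := by gcongr
    _ = 1 := by ring
  have hV1 : I 1 ![1] ![1] = 0 := hV 1 ![1] isDist_one1
  rcases eq_or_lt_of_le hab1 with hab | hab
  · -- α * β = 1, hence α = 1 and β = 1
    have ha : α = 1 := le_antisymm hα1 (by nlinarith)
    have hb : β = 1 := le_antisymm hβ1 (by nlinarith)
    have h10 : (![1, 0] : Fin 2 → ℝ) = ![(1:ℝ), 1 - 1] := by norm_num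
    subst ha hb
    rw [show (1:ℝ) * 1 = 1 by ring]
    rw [show (![1, 1-1] : Fin 2 → ℝ) = ![1, 0] by norm_num]
    rw [hV 2 ![1,0] isDist_one0]
    ring
  · -- main case: α * β < 1
    set γ : ℝ := 1 - α * β with hγ
    have hγ0 : 0 < γ := by simp [hγ]; linarith
    set s : ℝ := α * (1 - β) / γ with hs
    set t : ℝ := (1 - α) / γ with ht
    have hs0 : 0 ≤ s := by
      apply div_nonneg _ hγ0.le
      have : β ≤ 1 := hβ1
      nlinarith
    have ht0 : 0 ≤ t := div_nonneg (by linarith) hγ0.le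
    have hst : s + t = 1 := by
      rw [hs, ht, ← add_div, div_eq_one_iff_eq hγ0.ne', hγ]
      ring
    have hq : IsDist ![s, t] := by
      have := isDist_pair s hs0 (by linarith)
      rwa [show (1 - s : ℝ) = t by linarith] at this
    have hγs : γ * s = α * (1 - β) := by
      rw [hs, mul_div_assoc']
      exact mul_div_cancel_left₀ _ hγ0.ne'
    have hγt : γ * t = 1 - α := by
      rw [ht, mul_div_assoc']
      exact mul_div_cancel_left₀ _ hγ0.ne'
    -- Chain rule, decomposition A
    have hA := hC 2 ![2,1] ![1,0] ![α, 1-α] (pvecA 1 0) (pvecA β (1-β))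
      (relPair_one0 α hα0 hα1)
      (by
        intro i; fin_cases i
        · exact relPair_one0 β hβ0 hβ1
        · exact relPair_one1)
    -- Chain rule, decomposition B
    have hB := hC 2 ![1,2] ![1,0] ![α*β, γ] (pvecB s t) (pvecB s t)
      (by
        have := relPair_one0 (α*β) hab0 hab1
        rwa [← hγ] at this)
      (by
        intro i; fin_cases i
        · exact relPair_one1
        · exact relPair_self hq)
    have hA' : I 3 (comp ![2,1] ![1,0] (pvecA 1 0) : Fin 3 → ℝ)
        (comp ![2,1] ![α, 1-α] (pvecA β (1-β)) : Fin 3 → ℝ) =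
        I 2 ![1,0] ![α, 1-α] +
          ∑ i : Fin 2, ![1,0] i * I (![2,1] i) (pvecA 1 0 i) (pvecA β (1-β) i) := hA
    have hB' : I 3 (comp ![1,2] ![1,0] (pvecB s t) : Fin 3 → ℝ)
        (comp ![1,2] ![α*β, γ] (pvecB s t) : Fin 3 → ℝ) =
        I 2 ![1,0] ![α*β, γ] +
          ∑ i : Fin 2, ![1,0] i * I (![1,2] i) (pvecB s t i) (pvecB s t i) := hB
    rw [Fin.sum_univ_two] at hA' hB'
    rw [compA, compA] at hA'
    rw [compB, compB] at hB'
    have e0 : I (![2,1] 0) (pvecA 1 0 0) (pvecA β (1-β) 0) = I 2 ![1,0] ![β,1-β] := rfl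
    have e1 : I (![1,2] 0) (pvecB s t 0) (pvecB s t 0) = I 1 ![1] ![1] := rfl
    rw [e0] at hA'
    rw [e1] at hB'
    simp only [pvecA, pvecB, Fin.cons_zero, Fin.cons_one, Matrix.cons_val_zero,
      Matrix.cons_val_one, Matrix.head_cons, one_mul, zero_mul, add_zero] at hA' hB'
    rw [hγs, hγt] at hB'
    rw [show (![α*β, α*(1-β), (1-α)*1] : Fin 3 → ℝ) = ![α*β*1, α*(1-β), 1-α] by norm_num]
      at hA'
    rw [hA', hV1] at hB'
    linarith
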